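/- If G is an 𝒮₅-contractible loopless multigraph and G' is obtained from G by adding one new edge (between existing vertices), then G' is 𝒮₅-contractible and w(G') ≥ w(G). -/

import Mathlib

open Finset

/-- A loopless multigraph on vertex type `V`, given by a symmetric multiplicity function. -/
structure Multigraph (V : Type*) where
  mult : V → V → ℕ
  symm : ∀ u v, mult u v = mult v u
  loopless : ∀ v, mult v v = 0

namespace Multigraph

variable {V W : Type*}

/-- The underlying simple graph (adjacency = positive multiplicity). -/
def toSimpleGraph (G : Multigraph V) : SimpleGraph V where
  Adj u v := 0 < G.mult u v
  symm := by
    constructor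
    intro u v h
    rwa [G.symm v u]
  loopless := by
    constructor
    intro v h
    simp [G.loopless v] at h

/-- Connectivity of a multigraph. -/
def Connected (G : Multigraph V) : Prop := G.toSimpleGraph.Connected

/-- Number of edges `e(G)`. -/
def edgeCount (G : Multigraph V) [Fintype V] : ℕ := (∑ u, ∑ v, G.mult u v) / 2

/-- `d(X)`: the number of edges with exactly one endpoint in `X`. -/
def cut (G : Multigraph V) [Fintype V] [DecidableEq V] (X : Finset V) : ℕ :=
  ∑ u ∈ X, ∑ v ∈ Xᶜ, G.mult u v

/-- Degree of a vertex (with multiplicity). -/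
def degree (G : Multigraph V) [Fintype V] (v : V) : ℕ := ∑ u, G.mult v u

/-- Number of edges of `G` with both endpoints in `A` (edges of the induced subgraph `G[A]`). -/
def edgesWithin (G : Multigraph V) (A : Finset V) : ℕ :=
  (∑ u ∈ A, ∑ v ∈ A, G.mult u v) / 2

/-- Weight of a family of parts: `Σ d(A) − 10·t + 16`. -/
def partsWeight (G : Multigraph V) [Fintype V] [DecidableEq V]
    (Ps : Finset (Finset V)) : ℤ :=
  (∑ A ∈ Ps, (G.cut A : ℤ)) - 10 * Ps.card + 16

/-- Weight `w_G(𝒫)` of a vertex partition `𝒫`. -/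
def pweight (G : Multigraph V) [Fintype V] [DecidableEq V]
    (P : Finpartition (univ : Finset V)) : ℤ :=
  G.partsWeight P.parts

/-- Weight `w_{G[A]}(Q)` of a partition `Q` of `A` in the induced subgraph `G[A]`. -/
def inducedWeight (G : Multigraph V) [DecidableEq V] (A : Finset V)
    (Q : Finpartition A) : ℤ :=
  (∑ B ∈ Q.parts, ((∑ u ∈ B, ∑ v ∈ A \ B, G.mult u v : ℕ) : ℤ))
    - 10 * Q.parts.card + 16

/-- Isomorphism of multigraphs. -/
def Iso (G : Multigraph V) (H : Multigraph W) : Prop :=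
  ∃ e : V ≃ W, ∀ u v, H.mult (e u) (e v) = G.mult u v

/-- Contraction `G/𝒫`: identify each part to a single vertex and delete loops. -/
def contract (G : Multigraph V) [Fintype V] [DecidableEq V]
    (P : Finpartition (univ : Finset V)) : Multigraph {A // A ∈ P.parts} where
  mult A B := if A = B then 0 else ∑ u ∈ A.1, ∑ v ∈ B.1, G.mult u v
  symm := by
    intro A B
    by_cases h : A = B
    · simp [h]
    · rw [if_neg h, if_neg (Ne.symm h), Finset.sum_comm]
      exact Finset.sum_congr rfl fun b _ => Finset.sum_congr rfl fun a _ => G.symm a b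
  loopless := by intro A; simp

/-- Adding one new edge between distinct existing vertices. -/
def addEdge (G : Multigraph V) [DecidableEq V] (x y : V) (hxy : x ≠ y) : Multigraph V where
  mult u v := G.mult u v + (if (u = x ∧ v = y) ∨ (u = y ∧ v = x) then 1 else 0)
  symm := by
    intro u v
    rw [G.symm u v]
    by_cases h1 : (u = x ∧ v = y) ∨ (u = y ∧ v = x)
    · rw [if_pos h1, if_pos (by tauto)]
    · rw [if_neg h1, if_neg (by tauto)]
  loopless := by
    intro v
    have h : ¬((v = x ∧ v = y) ∨ (v = y ∧ v = x)) := by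
      rintro (⟨rfl, rfl⟩ | ⟨rfl, rfl⟩) <;> exact hxy rfl
    simp [h, G.loopless]

/-- `aK₂`: two vertices joined by `a` parallel edges. -/
def kTwo (a : ℕ) : Multigraph (Fin 2) where
  mult u v := if u = v then 0 else a
  symm := by
    intro u v
    by_cases h : u = v
    · subst h; rfl
    · rw [if_neg h, if_neg (Ne.symm h)]
  loopless := by intro v; simp

def triMult (a b c : ℕ) : ℕ → ℕ → ℕ
  | 0, 1 => a | 1, 0 => a
  | 0, 2 => b | 2, 0 => b
  | 1, 2 => c | 2, 1 => c
  | _, _ => 0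

/-- `T_{a,b,c}`: three vertices, the three pairs joined by `a`, `b`, `c` parallel edges. -/
def triangle (a b c : ℕ) : Multigraph (Fin 3) where
  mult u v := triMult a b c u.val v.val
  symm := by intro u v; fin_cases u <;> fin_cases v <;> rfl
  loopless := by intro v; fin_cases v <;> rfl

def w1Mult : ℕ → ℕ → ℕ
  | 0, 1 => 1 | 1, 0 => 1 | 0, 2 => 1 | 2, 0 => 1 | 1, 2 => 1 | 2, 1 => 1
  | 0, 3 => 3 | 3, 0 => 3 | 1, 3 => 3 | 3, 1 => 3 | 2, 3 => 3 | 3, 2 => 3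
  | _, _ => 0

/-- The 4-vertex, 12-edge planar multigraph `W₁`: a triangle of single edges whose
three vertices are each joined to a central vertex by triple edges. -/
def W1 : Multigraph (Fin 4) where
  mult u v := w1Mult u.val v.val
  symm := by decide
  loopless := by decide

def w2Mult : ℕ → ℕ → ℕ
  | 0, 1 => 3 | 1, 0 => 3
  | 0, 2 => 2 | 2, 0 => 2 | 0, 3 => 2 | 3, 0 => 2
  | 1, 2 => 2 | 2, 1 => 2 | 1, 3 => 2 | 3, 1 => 2
  | 2, 3 => 1 | 3, 2 => 1
  | _, _ => 0

/-- The 4-vertex, 12-edge planar multigraph `W₂`. -/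
def W2 : Multigraph (Fin 4) where
  mult u v := w2Mult u.val v.val
  symm := by decide
  loopless := by decide

def q4Mult (a1 a2 a3 a4 : ℕ) : ℕ → ℕ → ℕ
  | 0, 1 => a1 | 1, 0 => a1
  | 1, 2 => a2 | 2, 1 => a2
  | 2, 3 => a3 | 3, 2 => a3
  | 3, 0 => a4 | 0, 3 => a4
  | _, _ => 0

/-- `Q_{a₁,a₂,a₃,a₄}`: the 4-cycle with edge multiplicities `a₁,…,a₄`. -/
def Q4 (a1 a2 a3 a4 : ℕ) : Multigraph (Fin 4) where
  mult u v := q4Mult a1 a2 a3 a4 u.val v.val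
  symm := by intro u v; fin_cases u <;> fin_cases v <;> rfl
  loopless := by intro v; fin_cases v <;> rfl

/-- Membership (up to isomorphism) in `𝒩₅ = {2K₂, 3K₂, T₁,₃,₃, T₂,₂,₃, W₁, W₂}`. -/
def InN5 (G : Multigraph V) : Prop :=
  G.Iso (kTwo 2) ∨ G.Iso (kTwo 3) ∨ G.Iso (triangle 1 3 3) ∨
    G.Iso (triangle 2 2 3) ∨ G.Iso W1 ∨ G.Iso W2

/-- `𝒮₅`-contractibility: `G` is connected, `w(G) ≥ 0` (every partition with at least
two parts has nonnegative weight), and no contraction of `G` lies in `𝒩₅`. -/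
def S5Contractible (G : Multigraph V) [Fintype V] [DecidableEq V] : Prop :=
  G.Connected ∧
    (∀ P : Finpartition (univ : Finset V), 2 ≤ P.parts.card → 0 ≤ G.pweight P) ∧
    (∀ P : Finpartition (univ : Finset V), ¬ InN5 (G.contract P))

/-- Strong `ℤ_ℓ`-connectivity: every zero-sum boundary `β` admits a `β`-orientation.
An orientation is encoded as `o : V → V → ℕ` where `o u v` is the number of the
`G.mult u v` parallel edges between `u` and `v` that are oriented from `u` to `v`. -/
def StronglyZConnected (G : Multigraph V) [Fintype V] (l : ℕ) : Prop :=
  ∀ β : V → ZMod l, ∑ v, β v = 0 →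
    ∃ o : V → V → ℕ, (∀ u v, o u v + o v u = G.mult u v) ∧
      ∀ v, (∑ u, (o v u : ZMod l)) - (∑ u, (o u v : ZMod l)) = β v

end Multigraph

namespace Multigraph

variable {V : Type*}

lemma mult_ext {G H : Multigraph V} (h : G.mult = H.mult) : G = H := by
  cases G; cases H; cases h; rfl

lemma ind_sum [DecidableEq V] {x y : V} (hxy : x ≠ y) (s t : Finset V) :
    (∑ u ∈ s, ∑ v ∈ t, (if (u = x ∧ v = y) ∨ (u = y ∧ v = x) then 1 else 0)) =
      (if x ∈ s ∧ y ∈ t then 1 else 0) + (if y ∈ s ∧ x ∈ t then 1 else 0) := by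
  have key : ∀ u v : V, (if (u = x ∧ v = y) ∨ (u = y ∧ v = x) then (1 : ℕ) else 0) =
      (if u = x then 1 else 0) * (if v = y then 1 else 0)
        + (if u = y then 1 else 0) * (if v = x then 1 else 0) := by
    intro u v
    by_cases h1 : u = x <;> by_cases h2 : v = y <;> by_cases h3 : u = y <;>
      by_cases h4 : v = x <;> simp_all
  calc (∑ u ∈ s, ∑ v ∈ t, (if (u = x ∧ v = y) ∨ (u = y ∧ v = x) then 1 else 0))
      = ∑ u ∈ s, ∑ v ∈ t, ((if u = x then 1 else 0) * (if v = y then 1 else 0)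
          + (if u = y then 1 else 0) * (if v = x then 1 else 0)) :=
        Finset.sum_congr rfl fun u _ => Finset.sum_congr rfl fun v _ => key u v
    _ = (∑ u ∈ s, if u = x then 1 else 0) * (∑ v ∈ t, if v = y then 1 else 0)
          + (∑ u ∈ s, if u = y then 1 else 0) * (∑ v ∈ t, if v = x then 1 else 0) := by
        simp only [Finset.sum_add_distrib, ← Finset.mul_sum, ← Finset.sum_mul]
    _ = (if x ∈ s ∧ y ∈ t then 1 else 0) + (if y ∈ s ∧ x ∈ t then 1 else 0) := by
        simp only [Finset.sum_ite_eq']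
        split_ifs <;> simp_all

lemma sum_mult_addEdge [DecidableEq V] [Fintype V] (G : Multigraph V) (a b : V) (hab : a ≠ b) :
    ∑ u, ∑ v, (G.addEdge a b hab).mult u v = (∑ u, ∑ v, G.mult u v) + 2 := by
  simp only [addEdge, Finset.sum_add_distrib]
  rw [ind_sum hab]
  simp

lemma pweight_eq_contract_sum [Fintype V] [DecidableEq V] (G : Multigraph V)
    (P : Finpartition (univ : Finset V)) :
    G.pweight P =
      (∑ u : {A // A ∈ P.parts}, ∑ v : {A // A ∈ P.parts}, ((G.contract P).mult u v : ℤ))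
        - 10 * P.parts.card + 16 := by
  have hparts : ∀ f : V → ℕ, ∑ v, f v = ∑ B ∈ P.parts, ∑ v ∈ B, f v := by
    intro f
    conv_lhs => rw [show (univ : Finset V) = P.parts.biUnion id from P.biUnion_parts.symm]
    exact Finset.sum_biUnion (P.supIndep.pairwiseDisjoint)
  have hcut : ∀ A ∈ P.parts, (G.cut A : ℤ) =
      (∑ B ∈ P.parts, ((∑ u ∈ A, ∑ v ∈ B, G.mult u v : ℕ) : ℤ))
        - ((∑ u ∈ A, ∑ v ∈ A, G.mult u v : ℕ) : ℤ) := by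
    intro A hA
    have h2 : (G.cut A) + (∑ u ∈ A, ∑ v ∈ A, G.mult u v) = ∑ u ∈ A, ∑ v, G.mult u v := by
      simp only [cut, ← Finset.sum_add_distrib]
      exact Finset.sum_congr rfl fun u _ => Finset.sum_compl_add_sum A _
    have h3 : ∑ u ∈ A, ∑ v, G.mult u v = ∑ B ∈ P.parts, ∑ u ∈ A, ∑ v ∈ B, G.mult u v :=
      calc ∑ u ∈ A, ∑ v, G.mult u v = ∑ u ∈ A, ∑ B ∈ P.parts, ∑ v ∈ B, G.mult u v :=
            Finset.sum_congr rfl fun u _ => hparts _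
        _ = ∑ B ∈ P.parts, ∑ u ∈ A, ∑ v ∈ B, G.mult u v := Finset.sum_comm
    have h4 : (G.cut A : ℤ) + ((∑ u ∈ A, ∑ v ∈ A, G.mult u v : ℕ) : ℤ)
        = ∑ B ∈ P.parts, ((∑ u ∈ A, ∑ v ∈ B, G.mult u v : ℕ) : ℤ) := by
      rw [← Nat.cast_sum, ← Nat.cast_add, h2, h3]
    linarith [h4]
  have hmul : ∀ u v : {A // A ∈ P.parts}, ((G.contract P).mult u v : ℤ) =
      (if (u : Finset V) = (v : Finset V) then 0
        else ((∑ a ∈ (u : Finset V), ∑ b ∈ (v : Finset V), G.mult a b : ℕ) : ℤ)) := by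
    intro u v
    simp only [contract]
    by_cases h : u = v
    · simp [h]
    · rw [if_neg h, if_neg (fun hv => h (Subtype.ext hv))]
  have hsum : (∑ u : {A // A ∈ P.parts}, ∑ v : {A // A ∈ P.parts}, ((G.contract P).mult u v : ℤ))
      = ∑ A ∈ P.parts, ∑ B ∈ P.parts,
          (if A = B then 0 else ((∑ a ∈ A, ∑ b ∈ B, G.mult a b : ℕ) : ℤ)) := by
    calc (∑ u : {A // A ∈ P.parts}, ∑ v : {A // A ∈ P.parts}, ((G.contract P).mult u v : ℤ))
        = ∑ u : {A // A ∈ P.parts}, ∑ v : {A // A ∈ P.parts},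
            (if (u : Finset V) = (v : Finset V) then 0
              else ((∑ a ∈ (u : Finset V), ∑ b ∈ (v : Finset V), G.mult a b : ℕ) : ℤ)) :=
          Finset.sum_congr rfl fun u _ => Finset.sum_congr rfl fun v _ => hmul u v
      _ = ∑ u : {A // A ∈ P.parts}, ∑ B ∈ P.parts,
            (if (u : Finset V) = B then 0
              else ((∑ a ∈ (u : Finset V), ∑ b ∈ B, G.mult a b : ℕ) : ℤ)) :=
          Finset.sum_congr rfl fun u _ => Finset.sum_coe_sort P.parts
            (fun B => if (u : Finset V) = B then 0
              else ((∑ a ∈ (u : Finset V), ∑ b ∈ B, G.mult a b : ℕ) : ℤ))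
      _ = ∑ A ∈ P.parts, ∑ B ∈ P.parts,
            (if A = B then 0 else ((∑ a ∈ A, ∑ b ∈ B, G.mult a b : ℕ) : ℤ)) :=
          Finset.sum_coe_sort P.parts (fun A => ∑ B ∈ P.parts,
            (if A = B then 0 else ((∑ a ∈ A, ∑ b ∈ B, G.mult a b : ℕ) : ℤ)))
  have hg : ∀ A ∈ P.parts,
      (∑ B ∈ P.parts, (if A = B then 0 else ((∑ a ∈ A, ∑ b ∈ B, G.mult a b : ℕ) : ℤ)))
        = (∑ B ∈ P.parts, ((∑ a ∈ A, ∑ b ∈ B, G.mult a b : ℕ) : ℤ))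
            - ((∑ a ∈ A, ∑ b ∈ A, G.mult a b : ℕ) : ℤ) := by
    intro A hA
    have hstep : ∀ B ∈ P.parts, (if A = B then (0:ℤ)
        else ((∑ a ∈ A, ∑ b ∈ B, G.mult a b : ℕ) : ℤ))
        = ((∑ a ∈ A, ∑ b ∈ B, G.mult a b : ℕ) : ℤ)
          - (if A = B then ((∑ a ∈ A, ∑ b ∈ B, G.mult a b : ℕ) : ℤ) else 0) := by
      intro B _; split_ifs <;> ring
    rw [Finset.sum_congr rfl hstep, Finset.sum_sub_distrib, Finset.sum_ite_eq, if_pos hA]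
  have hfinal : ∑ A ∈ P.parts, (G.cut A : ℤ) = ∑ A ∈ P.parts, ∑ B ∈ P.parts,
      (if A = B then 0 else ((∑ a ∈ A, ∑ b ∈ B, G.mult a b : ℕ) : ℤ)) :=
    (Finset.sum_congr rfl hcut).trans (Finset.sum_congr rfl hg).symm
  simp only [pweight, partsWeight]
  rw [hsum, hfinal]

lemma contract_addEdge_same [Fintype V] [DecidableEq V] (G : Multigraph V)
    (P : Finpartition (univ : Finset V)) {x y : V} (hxy : x ≠ y)
    {A0 : Finset V} (hA0 : A0 ∈ P.parts) (hx : x ∈ A0) (hy : y ∈ A0) :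
    (G.addEdge x y hxy).contract P = G.contract P := by
  apply mult_ext
  funext A B
  simp only [contract, addEdge]
  by_cases hAB : A = B
  · simp [hAB]
  · rw [if_neg hAB, if_neg hAB]
    simp only [Finset.sum_add_distrib]
    rw [ind_sum hxy]
    have h1 : ¬(x ∈ (A : Finset V) ∧ y ∈ (B : Finset V)) := by
      rintro ⟨ha, hb⟩
      exact hAB (Subtype.ext ((P.eq_of_mem_parts A.2 hA0 ha hx).trans
        (P.eq_of_mem_parts hA0 B.2 hy hb)))
    have h2 : ¬(y ∈ (A : Finset V) ∧ x ∈ (B : Finset V)) := by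
      rintro ⟨ha, hb⟩
      exact hAB (Subtype.ext ((P.eq_of_mem_parts A.2 hA0 ha hy).trans
        (P.eq_of_mem_parts hA0 B.2 hx hb)))
    simp [h1, h2]

lemma contract_addEdge [Fintype V] [DecidableEq V] (G : Multigraph V)
    (P : Finpartition (univ : Finset V)) {x y : V} (hxy : x ≠ y)
    {Ax Ay : Finset V} (hAx : Ax ∈ P.parts) (hAy : Ay ∈ P.parts)
    (hx : x ∈ Ax) (hy : y ∈ Ay) (hne : Ax ≠ Ay) :
    (G.addEdge x y hxy).contract P =
      (G.contract P).addEdge ⟨Ax, hAx⟩ ⟨Ay, hAy⟩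
        (fun hh => hne (congrArg Subtype.val hh)) := by
  apply mult_ext
  funext A B
  simp only [contract, addEdge]
  by_cases hAB : A = B
  · subst hAB
    have hno : ¬((A = (⟨Ax, hAx⟩ : {A // A ∈ P.parts}) ∧ A = ⟨Ay, hAy⟩)
        ∨ (A = (⟨Ay, hAy⟩ : {A // A ∈ P.parts}) ∧ A = ⟨Ax, hAx⟩)) := by
      rintro (⟨h1, h2⟩ | ⟨h1, h2⟩)
      · exact hne (congrArg Subtype.val (h1.symm.trans h2))
      · exact hne (congrArg Subtype.val (h2.symm.trans h1))
    simp [hno]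
  · rw [if_neg hAB, if_neg hAB]
    simp only [Finset.sum_add_distrib]
    congr 1
    rw [ind_sum hxy]
    have hi1 : (x ∈ (A : Finset V) ∧ y ∈ (B : Finset V)) ↔
        (A = (⟨Ax, hAx⟩ : {A // A ∈ P.parts}) ∧ B = ⟨Ay, hAy⟩) := by
      constructor
      · rintro ⟨ha, hb⟩
        exact ⟨Subtype.ext (P.eq_of_mem_parts A.2 hAx ha hx),
          Subtype.ext (P.eq_of_mem_parts B.2 hAy hb hy)⟩
      · rintro ⟨rfl, rfl⟩; exact ⟨hx, hy⟩
    have hi2 : (y ∈ (A : Finset V) ∧ x ∈ (B : Finset V)) ↔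
        (A = (⟨Ay, hAy⟩ : {A // A ∈ P.parts}) ∧ B = ⟨Ax, hAx⟩) := by
      constructor
      · rintro ⟨ha, hb⟩
        exact ⟨Subtype.ext (P.eq_of_mem_parts A.2 hAy ha hy),
          Subtype.ext (P.eq_of_mem_parts B.2 hAx hb hx)⟩
      · rintro ⟨rfl, rfl⟩; exact ⟨hy, hx⟩
    rw [if_congr hi1 rfl rfl, if_congr hi2 rfl rfl]
    by_cases hc1 : A = (⟨Ax, hAx⟩ : {A // A ∈ P.parts}) ∧ B = ⟨Ay, hAy⟩
    · have hc2 : ¬(A = (⟨Ay, hAy⟩ : {A // A ∈ P.parts}) ∧ B = ⟨Ax, hAx⟩) := by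
        rintro ⟨h1, h2⟩
        exact hne (congrArg Subtype.val (hc1.1.symm.trans h1))
      simp [hc1, hc2]
      tauto
    · by_cases hc2 : A = (⟨Ay, hAy⟩ : {A // A ∈ P.parts}) ∧ B = ⟨Ax, hAx⟩
      · simp [hc1, hc2]
        tauto
      · simp [hc1, hc2]

/-- The key numeric contradiction: if `(G/P) + e` is isomorphic to a graph `H` on `n ≥ 2`
vertices with total multiplicity sum `10n − 16`, then `w_G(P) = −2 < 0`. -/
lemma bad_iso_case [Fintype V] [DecidableEq V] (G : Multigraph V)
    (hw : ∀ P : Finpartition (univ : Finset V), 2 ≤ P.parts.card → 0 ≤ G.pweight P)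
    (P : Finpartition (univ : Finset V)) (a b : {A // A ∈ P.parts}) (hab : a ≠ b)
    {n : ℕ} (H : Multigraph (Fin n)) (hn : 2 ≤ n)
    (htot : (∑ u, ∑ v, H.mult u v) + 16 = 10 * n)
    (hiso : Iso ((G.contract P).addEdge a b hab) H) : False := by
  obtain ⟨e, he⟩ := hiso
  have hcard : P.parts.card = n := by
    have h1 := Fintype.card_congr e
    rwa [Fintype.card_coe, Fintype.card_fin] at h1
  have hsumT : (∑ u : {A // A ∈ P.parts}, ∑ v : {A // A ∈ P.parts},
      ((G.contract P).addEdge a b hab).mult u v) = ∑ p, ∑ q, H.mult p q :=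
    Fintype.sum_equiv e _ _ fun u => Fintype.sum_equiv e _ _ fun v => (he u v).symm
  have hadd := sum_mult_addEdge (G.contract P) a b hab
  have hK : (∑ u : {A // A ∈ P.parts}, ∑ v : {A // A ∈ P.parts},
      (G.contract P).mult u v) + 18 = 10 * n := by omega
  have hpw := pweight_eq_contract_sum G P
  have h0 := hw P (by omega)
  rw [hpw, hcard] at h0
  have hcast : (∑ u : {A // A ∈ P.parts}, ∑ v : {A // A ∈ P.parts},
      ((G.contract P).mult u v : ℤ))
      = ((∑ u : {A // A ∈ P.parts}, ∑ v : {A // A ∈ P.parts},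
          (G.contract P).mult u v : ℕ) : ℤ) := by
    push_cast; rfl
  rw [hcast] at h0
  omega

end Multigraph

open Multigraph

/-- adding one new edge (between distinct existing vertices) to an
`𝒮₅`-contractible multigraph yields an `𝒮₅`-contractible multigraph `G'` with
`w(G') ≥ w(G)`. -/
theorem s5_add_edge {V : Type*} [Fintype V] [DecidableEq V] (G : Multigraph V)
    (h : S5Contractible G) (x y : V) (hxy : x ≠ y) :
    S5Contractible (G.addEdge x y hxy) ∧
      ∀ P : Finpartition (univ : Finset V), 2 ≤ P.parts.card →
        ∃ P₀ : Finpartition (univ : Finset V), 2 ≤ P₀.parts.card ∧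
          G.pweight P₀ ≤ (G.addEdge x y hxy).pweight P := by
  obtain ⟨hconn, hw, hN⟩ := h
  have hmono : ∀ P : Finpartition (univ : Finset V),
      G.pweight P ≤ (G.addEdge x y hxy).pweight P := by
    intro P
    have hc : ∀ A ∈ P.parts, (G.cut A : ℤ) ≤ ((G.addEdge x y hxy).cut A : ℤ) := by
      intro A _
      have : G.cut A ≤ (G.addEdge x y hxy).cut A :=
        Finset.sum_le_sum fun u _ => Finset.sum_le_sum fun v _ => Nat.le_add_right _ _
      exact_mod_cast this
    have hs := Finset.sum_le_sum hc
    simp only [pweight, partsWeight]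
    linarith
  refine ⟨⟨?_, ?_, ?_⟩, ?_⟩
  · refine SimpleGraph.Connected.mono ?_ hconn
    intro u v huv
    exact lt_of_lt_of_le huv (Nat.le_add_right _ _)
  · intro P hP
    exact le_trans (hw P hP) (hmono P)
  · intro P hIn
    by_cases hsame : ∃ A ∈ P.parts, x ∈ A ∧ y ∈ A
    · obtain ⟨A0, hA0, hx0, hy0⟩ := hsame
      rw [contract_addEdge_same G P hxy hA0 hx0 hy0] at hIn
      exact hN P hIn
    · have hAx := P.part_mem.2 (mem_univ x)
      have hAy := P.part_mem.2 (mem_univ y)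
      have hx' := P.mem_part (mem_univ x)
      have hy' := P.mem_part (mem_univ y)
      have hne : P.part x ≠ P.part y := fun hh => hsame ⟨P.part x, hAx, hx', hh ▸ hy'⟩
      rw [contract_addEdge G P hxy hAx hAy hx' hy' hne] at hIn
      set a : {A // A ∈ P.parts} := ⟨P.part x, hAx⟩ with ha
      set b : {A // A ∈ P.parts} := ⟨P.part y, hAy⟩ with hb
      have hab : a ≠ b := fun hh => hne (congrArg Subtype.val hh)
      rcases hIn with h5 | h5 | h5 | h5 | h5 | h5
      · exact bad_iso_case G hw P a b _ (kTwo 2) (by norm_num) (by decide) h5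
      · obtain ⟨e, he⟩ := h5
        have hfin2 : ∀ p q r : Fin 2, p ≠ q → r = p ∨ r = q := by decide
        have hmem : ∀ t : {A // A ∈ P.parts}, t = a ∨ t = b := by
          intro t
          rcases hfin2 (e a) (e b) (e t) (fun hh => hab (e.injective hh)) with hh | hh
          · exact Or.inl (e.injective hh)
          · exact Or.inr (e.injective hh)
        refine hN P (Or.inl ⟨e, ?_⟩)
        intro u v
        by_cases huv : u = v
        · subst huv
          simp [kTwo, (G.contract P).loopless]
        · have h3 := he u v
          have hind : (u = a ∧ v = b) ∨ (u = b ∧ v = a) := by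
            rcases hmem u with rfl | rfl <;> rcases hmem v with rfl | rfl
            · exact absurd rfl huv
            · exact Or.inl ⟨rfl, rfl⟩
            · exact Or.inr ⟨rfl, rfl⟩
            · exact absurd rfl huv
          have hne' : e u ≠ e v := fun hh => huv (e.injective hh)
          simp only [kTwo, addEdge] at h3 ⊢
          rw [if_neg hne'] at h3 ⊢
          rw [if_pos hind] at h3
          omega
      · exact bad_iso_case G hw P a b _ (triangle 1 3 3) (by norm_num) (by decide) h5
      · exact bad_iso_case G hw P a b _ (triangle 2 2 3) (by norm_num) (by decide) h5
      · exact bad_iso_case G hw P a b _ W1 (by norm_num) (by decide) h5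
      · exact bad_iso_case G hw P a b _ W2 (by norm_num) (by decide) h5
  · intro P hP
    exact ⟨P, hP, hmono P⟩
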